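/- In any algebra (S,*,') satisfying the three axioms, the identity (x * (y''' * y)) * y' = x * y''' holds for all x, y in S. -/
import Mathlib


theorem stmt (S : Type*) (m : S → S → S) (i : S → S)
    (E1 : ∀ x, m (m x (i x)) x = x)
    (E2 : ∀ x y, m (m x (i x)) (m (i y) y) = m (m (i y) y) (m x (i x)))
    (E3 : ∀ x y z, m (m x y) z = m x (m y (i (i z)))) :
    ∀ x y, m (m x (m (i (i (i y))) y)) (i y) = m x (i (i (i y))) := by
  -- L2 : x (x' x'') = x
  have L2 : ∀ x, m x (m (i x) (i (i x))) = x := by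
    intro x; rw [← E3]; exact E1 x
  -- L3 : x (x' (x z'')'') = x z
  have L3 : ∀ x z, m x (m (i x) (i (i (m x (i (i z)))))) = m x z := by
    intro x z
    calc m x (m (i x) (i (i (m x (i (i z))))))
        = m (m x (i x)) (m x (i (i z))) := (E3 _ _ _).symm
      _ = m (m (m x (i x)) x) z := (E3 _ _ _).symm
      _ = m x z := by rw [E1]
  -- L4 : z (z' (z'' w'''')) = z w
  have L4 : ∀ z w, m z (m (i z) (m (i (i z)) (i (i (i (i w)))))) = m z w := by
    intro z w
    calc m z (m (i z) (m (i (i z)) (i (i (i (i w))))))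
        = m z (m (m (i z) (i (i z))) (i (i w))) := by rw [E3 (i z) (i (i z)) (i (i w))]
      _ = m (m z (m (i z) (i (i z)))) w := (E3 _ _ _).symm
      _ = m z w := by rw [L2]
  -- L6 : v (w (u'' s'''')) = v (w (u s'')'')
  have L6 : ∀ v w u s, m v (m w (m (i (i u)) (i (i (i (i s)))))) =
      m v (m w (i (i (m u (i (i s)))))) := by
    intro v w u s
    calc m v (m w (m (i (i u)) (i (i (i (i s))))))
        = m v (m (m w (i (i u))) (i (i s))) := by rw [E3 w (i (i u)) (i (i s))]
      _ = m (m v (m w (i (i u)))) s := (E3 _ _ _).symm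
      _ = m (m (m v w) u) s := by rw [E3 v w u]
      _ = m (m v w) (m u (i (i s))) := E3 _ _ _
      _ = m v (m w (i (i (m u (i (i s)))))) := E3 _ _ _
  -- L8 : v (z'' (z' z'')'') = v z''
  have L8 : ∀ v z, m v (m (i (i z)) (i (i (m (i z) (i (i z)))))) = m v (i (i z)) := by
    intro v z
    calc m v (m (i (i z)) (i (i (m (i z) (i (i z))))))
        = m v (m (i (i z)) (m (i (i (i z))) (i (i (i (i z)))))) := (L6 v (i (i z)) (i z) z).symm
      _ = m v (i (i z)) := by rw [L2 (i (i z))]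
  -- L9 : x' x'' = x' x
  have L9 : ∀ x, m (i x) (i (i x)) = m (i x) x := by
    intro x
    have h3 := L3 (i x) x
    -- h3 : x' (x'' (x' x'')'') = x' x
    rw [L8 (i x) x] at h3
    exact h3
  -- L10 : v (v' v) = v
  have L10 : ∀ v, m v (m (i v) v) = v := by
    intro v; rw [← L9]; exact L2 v
  -- L11 : v' (v v''') = v'
  have L11 : ∀ v, m (i v) (m v (i (i (i v)))) = i v := by
    intro v
    have h := E1 (i v)
    -- (v' v'') v' = v'
    rw [L9] at h
    rw [E3] at h
    exact h
  -- L15 : z''' z'' = z''' z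
  have L15 : ∀ z, m (i (i (i z))) (i (i z)) = m (i (i (i z))) z := by
    intro z
    have h4 := L4 (i (i (i z))) z
    -- z''' (z'''' (z''''' z'''')) = z''' z
    rw [L10 (i (i (i (i z))))] at h4
    -- now h4 : z''' z'''' = z''' z
    rw [L9 (i (i z))] at h4
    exact h4
  -- L25 : x''' (x'' z'') = x''' (x z'')
  have L25 : ∀ x z, m (i (i (i x))) (m (i (i x)) (i (i z))) =
      m (i (i (i x))) (m x (i (i z))) := by
    intro x z
    calc m (i (i (i x))) (m (i (i x)) (i (i z)))
        = m (m (i (i (i x))) (i (i x))) z := (E3 _ _ _).symm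
      _ = m (m (i (i (i x))) x) z := by rw [L15]
      _ = m (i (i (i x))) (m x (i (i z))) := E3 _ _ _
  -- L26 : x''' (x x''''') = x'''
  have L26 : ∀ x, m (i (i (i x))) (m x (i (i (i (i (i x)))))) = i (i (i x)) := by
    intro x
    have h := L11 (i (i x))
    -- x''' (x'' x''''') = x'''
    rw [L25 x (i (i (i x)))] at h
    exact h
  intro x y
  calc m (m x (m (i (i (i y))) y)) (i y)
      = m x (m (m (i (i (i y))) y) (i (i (i y)))) := E3 _ _ _
    _ = m x (m (i (i (i y))) (m y (i (i (i (i (i y))))))) := by rw [E3 (i (i (i y))) y (i (i (i y)))]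
    _ = m x (i (i (i y))) := by rw [L26]
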